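/- arXiv:2507.23199 — 2 statements merged into one kernel-verified Lean document; each statement's English description precedes it below -/
import Mathlib

section
/- Let u, v : [0,∞) → ℝ^J be two solutions of the Lorenz 96 equation with ‖u(t)‖ ≤ ρ and ‖v(t)‖ ≤ ρ for all t ≥ 0, where ρ = √(2J)·|F|, and let δ(t) = v(t) − u(t). Then for all t ≥ 0, (d/dt)‖Πδ(t)‖² ≤ 32·ρ²·‖δ(t)‖². -/
/-- The Lorenz 96 vector field on `ℝ^J` with external forcing `F`,
with coordinates indexed cyclically modulo `J`. -/
noncomputable def lorenz96 (J : ℕ) [NeZero J] (F : ℝ)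
    (u : EuclideanSpace ℝ (Fin J)) : EuclideanSpace ℝ (Fin J) :=
  WithLp.toLp 2 fun j => (u (j + 1) - u (j - 2)) * u (j - 1) - u j + F

/-- The orthogonal projection of `ℝ^J` that keeps the coordinates whose
(1-based) index is not divisible by 3 and zeroes out every coordinate whose
(1-based) index is divisible by 3. -/
noncomputable def lorenz96Proj (J : ℕ)
    (u : EuclideanSpace ℝ (Fin J)) : EuclideanSpace ℝ (Fin J) :=
  WithLp.toLp 2 fun j => if ((j : ℕ) + 1) % 3 = 0 then 0 else u j

/-- `‖x‖ ^ 2` on Euclidean space is the sum of squares of coordinates. -/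
lemma euclid_norm_sq_eq {J : ℕ} (x : EuclideanSpace ℝ (Fin J)) :
    ‖x‖ ^ 2 = ∑ j : Fin J, (x j) ^ 2 := by
  rw [EuclideanSpace.norm_eq,
    Real.sq_sqrt (Finset.sum_nonneg fun i _ => sq_nonneg _)]
  simp [Real.norm_eq_abs, sq_abs]

/-- Each coordinate squared is bounded by the norm squared. -/
lemma euclid_coord_sq_le {J : ℕ} (x : EuclideanSpace ℝ (Fin J)) (ρ : ℝ)
    (hx : ‖x‖ ≤ ρ) (j : Fin J) : (x j) ^ 2 ≤ ρ ^ 2 := by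
  have h1 : (x j) ^ 2 ≤ ∑ i : Fin J, (x i) ^ 2 :=
    Finset.single_le_sum (fun i _ => sq_nonneg (x i)) (Finset.mem_univ j)
  rw [← euclid_norm_sq_eq] at h1
  nlinarith [norm_nonneg x]

theorem lorenz96_deriv_proj_err_sq_le (J J' : ℕ) [NeZero J]
    (hJ3 : J = 3 * J') (hJ4 : 4 ≤ J) (F : ℝ)
    (u v : ℝ → EuclideanSpace ℝ (Fin J))
    (hu : ∀ t : ℝ, 0 ≤ t → HasDerivAt u (lorenz96 J F (u t)) t)
    (hv : ∀ t : ℝ, 0 ≤ t → HasDerivAt v (lorenz96 J F (v t)) t)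
    (hubd : ∀ t : ℝ, 0 ≤ t → ‖u t‖ ≤ Real.sqrt (2 * J) * |F|)
    (hvbd : ∀ t : ℝ, 0 ≤ t → ‖v t‖ ≤ Real.sqrt (2 * J) * |F|) :
    ∀ t : ℝ, 0 ≤ t →
      deriv (fun s => ‖lorenz96Proj J (v s - u s)‖ ^ 2) t
        ≤ 32 * (Real.sqrt (2 * J) * |F|) ^ 2 * ‖v t - u t‖ ^ 2 := by
  intro t ht
  set ρ : ℝ := Real.sqrt (2 * J) * |F| with hρdef
  have hρ0 : 0 ≤ ρ := mul_nonneg (Real.sqrt_nonneg _) (abs_nonneg _)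
  set w : EuclideanSpace ℝ (Fin J) := v t - u t with hw
  set d : EuclideanSpace ℝ (Fin J) := lorenz96 J F (v t) - lorenz96 J F (u t)
    with hd
  -- derivative of the difference
  have hδ : HasDerivAt (fun s => v s - u s) d t := (hv t ht).sub (hu t ht)
  -- coordinatewise derivatives
  have hcoord : ∀ j : Fin J,
      HasDerivAt (fun s => (v s - u s) j) (d j) t := by
    intro j
    exact (EuclideanSpace.proj j).hasFDerivAt.comp_hasDerivAt t hδ
  -- derivatives of the (possibly zeroed) squared coordinates
  have hsq : ∀ j : Fin J,
      HasDerivAt (fun s => if ((j : ℕ) + 1) % 3 = 0 then (0 : ℝ)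
          else ((v s - u s) j) ^ 2)
        (if ((j : ℕ) + 1) % 3 = 0 then (0 : ℝ) else 2 * w j * d j) t := by
    intro j
    by_cases h : ((j : ℕ) + 1) % 3 = 0
    · simpa [h] using hasDerivAt_const t (0 : ℝ)
    · simp only [h, if_false]
      have h2 := (hcoord j).fun_pow 2
      simp only [pow_one, Nat.cast_ofNat] at h2
      refine h2.congr_deriv ?_
      rw [hw]
      ring
  have hsum : HasDerivAt
      (fun s => ∑ j : Fin J, if ((j : ℕ) + 1) % 3 = 0 then (0 : ℝ)
          else ((v s - u s) j) ^ 2)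
      (∑ j : Fin J, if ((j : ℕ) + 1) % 3 = 0 then (0 : ℝ)
          else 2 * w j * d j) t :=
    HasDerivAt.fun_sum fun j _ => hsq j
  -- rewrite the norm-squared function as a sum of squares
  have hfun : (fun s => ‖lorenz96Proj J (v s - u s)‖ ^ 2)
      = fun s => ∑ j : Fin J, if ((j : ℕ) + 1) % 3 = 0 then (0 : ℝ)
          else ((v s - u s) j) ^ 2 := by
    funext s
    rw [euclid_norm_sq_eq]
    refine Finset.sum_congr rfl fun j _ => ?_
    simp [lorenz96Proj, apply_ite (fun y : ℝ => y ^ 2)]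
  rw [hfun, hsum.deriv]
  -- formula for the coordinates of d
  have hdj : ∀ j : Fin J, d j =
      (w (j + 1) - w (j - 2)) * (v t (j - 1))
        + (u t (j + 1) - u t (j - 2)) * w (j - 1) - w j := by
    intro j
    have : d j = lorenz96 J F (v t) j - lorenz96 J F (u t) j := rfl
    rw [this]
    have hw1 : ∀ k : Fin J, w k = v t k - u t k := fun k => rfl
    simp only [lorenz96, PiLp.toLp_apply, hw1]
    ring
  -- pointwise key estimate
  have hb := fun k => euclid_coord_sq_le (v t) ρ (hvbd t ht) k
  have ha := fun k => euclid_coord_sq_le (u t) ρ (hubd t ht) k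
  have hkey : ∀ j : Fin J,
      (if ((j : ℕ) + 1) % 3 = 0 then (0 : ℝ) else 2 * w j * d j)
        ≤ 2 * ρ ^ 2 * ((w (j + 1)) ^ 2 + (w (j - 2)) ^ 2
            + 2 * (w (j - 1)) ^ 2) := by
    intro j
    have hrhs : (0 : ℝ) ≤ 2 * ρ ^ 2 * ((w (j + 1)) ^ 2 + (w (j - 2)) ^ 2
        + 2 * (w (j - 1)) ^ 2) := by positivity
    by_cases h : ((j : ℕ) + 1) % 3 = 0
    · simpa [h] using hrhs
    · simp only [h, if_false]
      rw [hdj j]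
      nlinarith [sq_nonneg (w j - 2 * w (j + 1) * v t (j - 1)),
        sq_nonneg (w j + 2 * w (j - 2) * v t (j - 1)),
        sq_nonneg (w j - 2 * w (j - 1) * u t (j + 1)),
        sq_nonneg (w j + 2 * w (j - 1) * u t (j - 2)),
        mul_nonneg (sq_nonneg (w (j + 1))) (sub_nonneg.2 (hb (j - 1))),
        mul_nonneg (sq_nonneg (w (j - 2))) (sub_nonneg.2 (hb (j - 1))),
        mul_nonneg (sq_nonneg (w (j - 1))) (sub_nonneg.2 (ha (j + 1))),
        mul_nonneg (sq_nonneg (w (j - 1))) (sub_nonneg.2 (ha (j - 2)))]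
  -- sum the pointwise estimates
  have hsum_le : (∑ j : Fin J, if ((j : ℕ) + 1) % 3 = 0 then (0 : ℝ)
        else 2 * w j * d j)
      ≤ ∑ j : Fin J, 2 * ρ ^ 2 * ((w (j + 1)) ^ 2 + (w (j - 2)) ^ 2
          + 2 * (w (j - 1)) ^ 2) :=
    Finset.sum_le_sum fun j _ => hkey j
  -- each shifted sum of squares equals the norm squared
  have hshift1 : ∑ j : Fin J, (w (j + 1)) ^ 2 = ‖w‖ ^ 2 := by
    rw [euclid_norm_sq_eq]
    exact Equiv.sum_comp (Equiv.addRight (1 : Fin J)) (fun k => (w k) ^ 2)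
  have hshift2 : ∑ j : Fin J, (w (j - 2)) ^ 2 = ‖w‖ ^ 2 := by
    rw [euclid_norm_sq_eq]
    exact Equiv.sum_comp (Equiv.subRight (2 : Fin J)) (fun k => (w k) ^ 2)
  have hshift3 : ∑ j : Fin J, (w (j - 1)) ^ 2 = ‖w‖ ^ 2 := by
    rw [euclid_norm_sq_eq]
    exact Equiv.sum_comp (Equiv.subRight (1 : Fin J)) (fun k => (w k) ^ 2)
  have htotal : ∑ j : Fin J, 2 * ρ ^ 2 * ((w (j + 1)) ^ 2 + (w (j - 2)) ^ 2
      + 2 * (w (j - 1)) ^ 2) = 8 * ρ ^ 2 * ‖w‖ ^ 2 := by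
    rw [← Finset.mul_sum]
    rw [Finset.sum_add_distrib, Finset.sum_add_distrib, ← Finset.mul_sum]
    rw [hshift1, hshift2, hshift3]
    ring
  have hfinal : (8 : ℝ) * ρ ^ 2 * ‖w‖ ^ 2 ≤ 32 * ρ ^ 2 * ‖w‖ ^ 2 := by
    nlinarith [sq_nonneg ρ, sq_nonneg ‖w‖, mul_nonneg (sq_nonneg ρ) (sq_nonneg ‖w‖)]
  calc (∑ j : Fin J, if ((j : ℕ) + 1) % 3 = 0 then (0 : ℝ)
        else 2 * w j * d j)
      ≤ ∑ j : Fin J, 2 * ρ ^ 2 * ((w (j + 1)) ^ 2 + (w (j - 2)) ^ 2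
          + 2 * (w (j - 1)) ^ 2) := hsum_le
    _ = 8 * ρ ^ 2 * ‖w‖ ^ 2 := htotal
    _ ≤ 32 * ρ ^ 2 * ‖w‖ ^ 2 := hfinal
end

section
/- Let u, v : [0,∞) → ℝ^J be two solutions of the Lorenz 96 equation with ‖u(t)‖ ≤ ρ for all t ≥ 0, where ρ = √(2J)·|F|, let δ(t) = v(t) − u(t), and assume c > 0 is such that ⟨2B(a,b) + B(b,b), b⟩ ≤ c·‖a‖·‖b‖·‖Πb‖ for all a, b ∈ ℝ^J. Then for all t ≥ 0, (d/dt)‖δ(t)‖² + 2·‖δ(t)‖² ≤ 2cρ·‖δ(t)‖·‖Πδ(t)‖. -/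
/-- The symmetric bilinear map of the Lorenz 96 model, with coordinates
indexed cyclically modulo `J`. -/
noncomputable def lorenz96B (J : ℕ) [NeZero J]
    (u v : EuclideanSpace ℝ (Fin J)) : EuclideanSpace ℝ (Fin J) :=
  WithLp.toLp 2 fun j => (1 / 2) * (v (j - 1) * u (j + 1) + u (j - 1) * v (j + 1)
    - v (j - 2) * u (j - 1) - u (j - 2) * v (j - 1))

lemma lorenz96_sub (J : ℕ) [NeZero J] (F : ℝ) (a b : EuclideanSpace ℝ (Fin J)) :
    lorenz96 J F b - lorenz96 J F a
      = 2 • lorenz96B J a (b - a) + lorenz96B J (b - a) (b - a) - (b - a) := by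
  ext j
  simp only [lorenz96, lorenz96B, PiLp.sub_apply, PiLp.add_apply, PiLp.smul_apply,
    smul_eq_mul, PiLp.toLp_apply]
  ring

theorem lorenz96_deriv_err_sq_le (J J' : ℕ) [NeZero J]
    (hJ3 : J = 3 * J') (hJ4 : 4 ≤ J) (F : ℝ) (c : ℝ) (hc : 0 < c)
    (hB : ∀ a b : EuclideanSpace ℝ (Fin J),
      inner (𝕜 := ℝ) (2 • lorenz96B J a b + lorenz96B J b b) b
        ≤ c * ‖a‖ * ‖b‖ * ‖lorenz96Proj J b‖)
    (u v : ℝ → EuclideanSpace ℝ (Fin J))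
    (hu : ∀ t : ℝ, 0 ≤ t → HasDerivAt u (lorenz96 J F (u t)) t)
    (hv : ∀ t : ℝ, 0 ≤ t → HasDerivAt v (lorenz96 J F (v t)) t)
    (hubd : ∀ t : ℝ, 0 ≤ t → ‖u t‖ ≤ Real.sqrt (2 * J) * |F|) :
    ∀ t : ℝ, 0 ≤ t →
      deriv (fun s => ‖v s - u s‖ ^ 2) t + 2 * ‖v t - u t‖ ^ 2
        ≤ 2 * c * (Real.sqrt (2 * J) * |F|) * ‖v t - u t‖
            * ‖lorenz96Proj J (v t - u t)‖ := by
  intro t ht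
  set δ : EuclideanSpace ℝ (Fin J) := v t - u t with hδ
  have hd : HasDerivAt (fun s => v s - u s)
      (lorenz96 J F (v t) - lorenz96 J F (u t)) t := (hv t ht).sub (hu t ht)
  have hfun : (fun s => ‖v s - u s‖ ^ 2)
      = fun s => inner (𝕜 := ℝ) (v s - u s) (v s - u s) := by
    funext s; rw [real_inner_self_eq_norm_sq]
  rw [hfun, (hd.inner ℝ hd).deriv, ← hδ]
  have hkey : inner (𝕜 := ℝ) (lorenz96 J F (v t) - lorenz96 J F (u t)) δ
      = inner (𝕜 := ℝ) (2 • lorenz96B J (u t) δ + lorenz96B J δ δ) δ - ‖δ‖ ^ 2 := by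
    rw [lorenz96_sub J F (u t) (v t), ← hδ, inner_sub_left, real_inner_self_eq_norm_sq]
  have hcomm : inner (𝕜 := ℝ) δ (lorenz96 J F (v t) - lorenz96 J F (u t))
      = inner (𝕜 := ℝ) (2 • lorenz96B J (u t) δ + lorenz96B J δ δ) δ - ‖δ‖ ^ 2 := by
    rw [real_inner_comm]; exact hkey
  rw [hcomm]
  have h1 := hB (u t) δ
  have h2 := hubd t ht
  have hρ : (0 : ℝ) ≤ Real.sqrt (2 * J) * |F| := le_trans (norm_nonneg _) h2
  have hδn : (0 : ℝ) ≤ ‖δ‖ := norm_nonneg _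
  have hPn : (0 : ℝ) ≤ ‖lorenz96Proj J δ‖ := norm_nonneg _
  nlinarith [mul_le_mul_of_nonneg_right (mul_le_mul_of_nonneg_left h2 hc.le)
    (mul_nonneg hδn hPn), mul_nonneg (mul_nonneg hc.le hδn) hPn]
end
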